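/- Let (R, m) be a commutative Noetherian local ring with maximal ideal m, and let χ, χ' : Ideal(R) → [0,+∞] be tropical characters on the semiring of ideals of R such that χ(m) > 0 and χ'(m) > 0. If χ(I) = χ'(I) for every ideal I of R that contains some power m^k (k ≥ 1) of the maximal ideal, then χ = χ', i.e. χ(J) = χ'(J) for every ideal J. -/
import Mathlib


/-- A tropical character on a commutative semiring. -/
def IsTropChar {S : Type*} [CommSemiring S] (χ : S → ENNReal) : Prop :=
  (∀ a b : S, χ (a * b) = χ a + χ b) ∧
  (∀ a b : S, χ (a + b) = min (χ a) (χ b)) ∧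
  χ 1 = 0 ∧ χ 0 = ⊤

theorem IsTropChar.pow {S : Type*} [CommSemiring S] {χ : S → ENNReal}
    (hχ : IsTropChar χ) (a : S) (k : ℕ) : χ (a ^ k) = k * χ a := by
  induction k with
  | zero => simpa using hχ.2.2.1
  | succ n ih =>
    rw [pow_succ, hχ.1, ih]
    push_cast
    ring

/-- Two tropical characters on the ideals of a Noetherian local ring `(R, m)`,
both centered at the closed point (i.e. positive on `m`), which agree on all
ideals containing a power `m^k` (`k ≥ 1`) of the maximal ideal, are equal. -/
theorem tropChar_centered_determined_by_primary_ideals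
    (R : Type*) [CommRing R] [IsNoetherianRing R] [IsLocalRing R]
    (χ χ' : Ideal R → ENNReal) (hχ : IsTropChar χ) (hχ' : IsTropChar χ')
    (hm : 0 < χ (IsLocalRing.maximalIdeal R))
    (hm' : 0 < χ' (IsLocalRing.maximalIdeal R))
    (h : ∀ I : Ideal R,
      (∃ k : ℕ, 1 ≤ k ∧ (IsLocalRing.maximalIdeal R) ^ k ≤ I) → χ I = χ' I) :
    ∀ J : Ideal R, χ J = χ' J := by
  intro J
  set m := IsLocalRing.maximalIdeal R
  -- key identity for all k ≥ 1
  have key : ∀ k : ℕ, 1 ≤ k → min (χ J) (k * χ m) = min (χ' J) (k * χ' m) := by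
    intro k hk
    have h1 : χ (J + m ^ k) = min (χ J) (k * χ m) := by
      rw [hχ.2.1, hχ.pow]
    have h2 : χ' (J + m ^ k) = min (χ' J) (k * χ' m) := by
      rw [hχ'.2.1, hχ'.pow]
    rw [← h1, ← h2]
    exact h _ ⟨k, hk, le_sup_right⟩
  -- find k with k * χ m > b for any finite b
  have big : ∀ (a b : ENNReal), 0 < a → b ≠ ⊤ → ∃ k : ℕ, 1 ≤ k ∧ b < k * a := by
    intro a b ha hb
    obtain ⟨n, hn⟩ := ENNReal.exists_nat_mul_gt ha.ne' hb
    refine ⟨n + 1, le_add_self, lt_of_lt_of_le hn ?_⟩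
    gcongr
    exact_mod_cast Nat.le_succ n
  by_cases hJ : χ J = ⊤
  · by_cases hJ' : χ' J = ⊤
    · rw [hJ, hJ']
    · obtain ⟨k, hk1, hk⟩ := big (χ m) (χ' J) hm hJ'
      have := key k hk1
      rw [hJ, min_eq_right le_top] at this
      exact absurd hk (not_lt.mpr (this.le.trans (min_le_left _ _)))
  · by_cases hJ' : χ' J = ⊤
    · obtain ⟨k, hk1, hk⟩ := big (χ' m) (χ J) hm' hJ
      have := key k hk1
      rw [hJ', min_eq_right le_top] at this
      exact absurd hk (not_lt.mpr (this.ge.trans (min_le_left _ _)))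
    · obtain ⟨k, hk1, hk⟩ := big (χ m) (χ J) hm hJ
      obtain ⟨k', hk1', hk'⟩ := big (χ' m) (χ' J) hm' hJ'
      have hkk : 1 ≤ max k k' := le_trans hk1 (le_max_left _ _)
      have := key (max k k') hkk
      have hA : χ J < (max k k' : ℕ) * χ m := by
        refine lt_of_lt_of_le hk ?_; gcongr; exact_mod_cast le_max_left k k'
      have hB : χ' J < (max k k' : ℕ) * χ' m := by
        refine lt_of_lt_of_le hk' ?_; gcongr; exact_mod_cast le_max_right k k'
      rwa [min_eq_left hA.le, min_eq_left hB.le] at this
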